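/- Let p ∈ A⊗B⊗C with R(p) = r > 0, and let α ∈ A* with p(α) ≠ 0 in B⊗C. Then there exists a ∈ A with α(a) = 1 such that the tensor p̃_a := p − a⊗p(α) ∈ α^⊥ ⊗ B ⊗ C satisfies R(p̃_a) ≤ r − 1. -/

import Mathlib

open TensorProduct

/-- Tensor rank of `p ∈ A ⊗ B ⊗ C`: minimal number of simple tensors summing to `p`. -/
noncomputable def tRank (k : Type*) [Field k] {A B C : Type*} [AddCommGroup A] [Module k A]
    [AddCommGroup B] [Module k B] [AddCommGroup C] [Module k C]
    (p : A ⊗[k] (B ⊗[k] C)) : ℕ :=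
  sInf {r | ∃ a : Fin r → A, ∃ b : Fin r → B, ∃ c : Fin r → C,
    p = ∑ i, a i ⊗ₜ[k] (b i ⊗ₜ[k] c i)}

/-- Rank of a subspace `W ⊆ B ⊗ C`: minimal number of rank-one matrices whose span
contains `W`. -/
noncomputable def sRank (k : Type*) [Field k] {B C : Type*} [AddCommGroup B] [Module k B]
    [AddCommGroup C] [Module k C] (W : Submodule k (B ⊗[k] C)) : ℕ :=
  sInf {r | ∃ s : Fin r → B ⊗[k] C, (∀ i, ∃ b c, s i = b ⊗ₜ[k] c) ∧
    W ≤ Submodule.span k (Set.range s)}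

/-- The slice of `p ∈ A ⊗ B ⊗ C` at a functional `α ∈ A*`. -/
noncomputable def pSlice {k : Type*} [Field k] {A B C : Type*} [AddCommGroup A] [Module k A]
    [AddCommGroup B] [Module k B] [AddCommGroup C] [Module k C]
    (p : A ⊗[k] (B ⊗[k] C)) (α : Module.Dual k A) : B ⊗[k] C :=
  TensorProduct.lid k (B ⊗[k] C) (LinearMap.rTensor (B ⊗[k] C) α p)

/-- The slice space `p(A*) ⊆ B ⊗ C` of `p ∈ A ⊗ B ⊗ C`. -/
noncomputable def sliceSpace (k : Type*) [Field k] {A B C : Type*} [AddCommGroup A] [Module k A]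
    [AddCommGroup B] [Module k B] [AddCommGroup C] [Module k C]
    (p : A ⊗[k] (B ⊗[k] C)) : Submodule k (B ⊗[k] C) :=
  Submodule.span k {w | ∃ α : Module.Dual k A, w = pSlice p α}

lemma exists_decomp {k : Type*} [Field k] {A B C : Type*} [AddCommGroup A] [Module k A]
    [FiniteDimensional k A] [AddCommGroup B] [Module k B] [FiniteDimensional k B]
    [AddCommGroup C] [Module k C] [FiniteDimensional k C] (p : A ⊗[k] (B ⊗[k] C)) :
    ∃ n, ∃ a : Fin n → A, ∃ b : Fin n → B, ∃ c : Fin n → C,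
      p = ∑ i, a i ⊗ₜ[k] (b i ⊗ₜ[k] c i) := by
  let bA := Module.Basis.ofVectorSpace k A
  let bB := Module.Basis.ofVectorSpace k B
  let bC := Module.Basis.ofVectorSpace k C
  let T := bA.tensorProduct (bB.tensorProduct bC)
  let ι := Module.Basis.ofVectorSpaceIndex k A × (Module.Basis.ofVectorSpaceIndex k B × Module.Basis.ofVectorSpaceIndex k C)
  haveI : Fintype ι := by infer_instance
  let e := (Fintype.equivFin ι).symm
  refine ⟨Fintype.card ι, fun i => T.repr p (e i) • bA (e i).1,
    fun i => bB (e i).2.1, fun i => bC (e i).2.2, ?_⟩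
  have h := T.sum_repr p
  conv_lhs => rw [← h, ← Equiv.sum_comp e (fun j => T.repr p j • T j)]
  refine Finset.sum_congr rfl fun i _ => ?_
  have : T (e i) = bA (e i).1 ⊗ₜ[k] (bB (e i).2.1 ⊗ₜ[k] bC (e i).2.2) := by
    simp [T, Module.Basis.tensorProduct_apply']
  rw [this, smul_tmul']

/-- Substitution method, part (1): if `R(p) = r > 0` and `p(α) ≠ 0`, then for some
`a ∈ A` with `α(a) = 1` the tensor `p̃ₐ = p − a ⊗ p(α)` has rank at most `r − 1`. -/
theorem substitution_exists_rank_drop {k : Type*} [Field k] {A B C : Type*} [AddCommGroup A] [Module k A] [FiniteDimensional k A]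
    [AddCommGroup B] [Module k B] [FiniteDimensional k B]
    [AddCommGroup C] [Module k C] [FiniteDimensional k C]
    (p : A ⊗[k] (B ⊗[k] C)) {r : ℕ} (hr : tRank k p = r) (hr0 : 0 < r)
    (α : Module.Dual k A) (hα : pSlice p α ≠ 0) :
    ∃ a : A, α a = 1 ∧ tRank k (p - a ⊗ₜ[k] pSlice p α) ≤ r - 1 := by
  obtain ⟨m, rfl⟩ : ∃ m, r = m + 1 := ⟨r - 1, (Nat.succ_pred_eq_of_pos hr0).symm⟩
  have hne : {n | ∃ a : Fin n → A, ∃ b : Fin n → B, ∃ c : Fin n → C,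
      p = ∑ i, a i ⊗ₜ[k] (b i ⊗ₜ[k] c i)}.Nonempty := by
    obtain ⟨n, a, b, c, h⟩ := exists_decomp p
    exact ⟨n, a, b, c, h⟩
  have hmem := Nat.sInf_mem hne
  rw [show sInf _ = tRank k p from rfl, hr] at hmem
  obtain ⟨a, b, c, hp⟩ := hmem
  have hslice : pSlice p α = ∑ i, α (a i) • (b i ⊗ₜ[k] c i) := by
    rw [pSlice, hp, map_sum, map_sum]
    refine Finset.sum_congr rfl fun i _ => ?_
    simp [LinearMap.rTensor_tmul, TensorProduct.lid_tmul]
  have hex : ∃ i₀, α (a i₀) ≠ 0 := by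
    by_contra h
    push_neg at h
    apply hα
    rw [hslice]
    simp [h]
  obtain ⟨i₀, hi₀⟩ := hex
  set a0 : A := (α (a i₀))⁻¹ • a i₀ with ha0
  have hαa0 : α a0 = 1 := by
    rw [ha0, map_smul, smul_eq_mul, inv_mul_cancel₀ hi₀]
  refine ⟨a0, hαa0, ?_⟩
  set f : Fin (m + 1) → A ⊗[k] (B ⊗[k] C) :=
    fun i => (a i - α (a i) • a0) ⊗ₜ[k] (b i ⊗ₜ[k] c i) with hf
  have key : p - a0 ⊗ₜ[k] pSlice p α = ∑ i, f i := by
    rw [hslice, hp, tmul_sum]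
    rw [← Finset.sum_sub_distrib]
    refine Finset.sum_congr rfl fun i _ => ?_
    simp only [hf, sub_tmul, smul_tmul, smul_tmul']
  have hf0 : f i₀ = 0 := by
    have : a i₀ - α (a i₀) • a0 = 0 := by
      rw [ha0, smul_smul, mul_inv_cancel₀ hi₀, one_smul, sub_self]
    rw [hf]
    simp [this]
  have key2 : p - a0 ⊗ₜ[k] pSlice p α = ∑ j : Fin m, f (i₀.succAbove j) := by
    rw [key, Fin.sum_univ_succAbove f i₀, hf0, zero_add]
  have : tRank k (p - a0 ⊗ₜ[k] pSlice p α) ≤ m := by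
    apply Nat.sInf_le
    exact ⟨fun j => a (i₀.succAbove j) - α (a (i₀.succAbove j)) • a0,
      fun j => b (i₀.succAbove j), fun j => c (i₀.succAbove j), key2⟩
  simpa using this
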